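/- The softmax function S : ℝ^D → ℝ^D defined by S(x)_i = exp(x_i) / ∑_{j=1}^{D} exp(x_j) is 1-Lipschitz with respect to the Euclidean (ℓ²) norm: ‖S(x₁) − S(x₂)‖₂ ≤ ‖x₁ − x₂‖₂ for all x₁, x₂ ∈ ℝ^D. -/

import Mathlib

open Finset

/-- Key algebraic bound: the "Jacobian quadratic form" bound for softmax. -/
lemma softmax_core {D : ℕ} (s u w : Fin D → ℝ)
    (hs0 : ∀ i, 0 ≤ s i) (hs1 : ∀ i, s i ≤ 1) (hsum : ∑ i, s i = 1) :
    |∑ i, w i * (s i * (u i - ∑ j, s j * u j))| ≤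
      Real.sqrt (∑ i, u i ^ 2) * Real.sqrt (∑ i, w i ^ 2) := by
  set m := ∑ j, s j * u j with hm
  set a : Fin D → ℝ := fun i => s i * (u i - m) with ha
  have key : ∑ i, a i ^ 2 ≤ ∑ i, u i ^ 2 := by
    have h1 : ∑ i, a i ^ 2 ≤ ∑ i, s i * (u i - m) ^ 2 := by
      apply Finset.sum_le_sum; intro i _
      have : a i ^ 2 = s i ^ 2 * (u i - m) ^ 2 := by rw [ha]; ring
      rw [this]
      exact mul_le_mul_of_nonneg_right (by nlinarith [hs0 i, hs1 i]) (sq_nonneg _)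
    have h2 : ∑ i, s i * (u i - m) ^ 2 = (∑ i, s i * u i ^ 2) - m ^ 2 := by
      have e : ∀ i ∈ Finset.univ (α := Fin D),
          s i * (u i - m) ^ 2 = s i * u i ^ 2 - 2 * m * (s i * u i) + m ^ 2 * s i := by
        intro i _; ring
      rw [Finset.sum_congr rfl e, Finset.sum_add_distrib, Finset.sum_sub_distrib,
        ← Finset.mul_sum, ← Finset.mul_sum, hsum, ← hm]
      ring
    have h3 : ∑ i, s i * u i ^ 2 ≤ ∑ i, u i ^ 2 := by
      apply Finset.sum_le_sum; intro i _
      nlinarith [hs0 i, hs1 i, sq_nonneg (u i)]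
    nlinarith [sq_nonneg m]
  have cs : (∑ i, w i * a i) ^ 2 ≤ (∑ i, w i ^ 2) * ∑ i, a i ^ 2 :=
    Finset.sum_mul_sq_le_sq_mul_sq _ _ _
  have hwnn : (0:ℝ) ≤ ∑ i, w i ^ 2 := Finset.sum_nonneg fun i _ => sq_nonneg _
  have hb : (∑ i, w i * a i) ^ 2 ≤ (∑ i, u i ^ 2) * ∑ i, w i ^ 2 := by
    nlinarith [cs, key, hwnn]
  have habs : |∑ i, w i * a i| = Real.sqrt ((∑ i, w i * a i) ^ 2) := by
    rw [Real.sqrt_sq_eq_abs]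
  calc |∑ i, w i * (s i * (u i - m))| = Real.sqrt ((∑ i, w i * a i) ^ 2) := habs
    _ ≤ Real.sqrt ((∑ i, u i ^ 2) * ∑ i, w i ^ 2) := Real.sqrt_le_sqrt hb
    _ = Real.sqrt (∑ i, u i ^ 2) * Real.sqrt (∑ i, w i ^ 2) := Real.sqrt_mul
        (Finset.sum_nonneg fun i _ => sq_nonneg (u i)) _

theorem softmax_lipschitz_one (D : ℕ)
    (S : EuclideanSpace ℝ (Fin D) → EuclideanSpace ℝ (Fin D))
    (hS : ∀ x i, S x i = Real.exp (x i) / ∑ j, Real.exp (x j)) :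
    ∀ x₁ x₂, ‖S x₁ - S x₂‖ ≤ ‖x₁ - x₂‖ := by
  intro x₁ x₂
  rcases Nat.eq_zero_or_pos D with hD | hD
  · subst hD
    have : S x₁ - S x₂ = 0 := Subsingleton.elim _ _
    rw [this, norm_zero]
    exact norm_nonneg _
  -- main case
  set u : Fin D → ℝ := fun i => x₂ i - x₁ i with hu
  set w : Fin D → ℝ := fun i => S x₂ i - S x₁ i with hw
  set C : ℝ := Real.sqrt (∑ i, u i ^ 2) * Real.sqrt (∑ i, w i ^ 2) with hC
  -- the path
  set e : Fin D → ℝ → ℝ := fun i t => Real.exp (x₁ i + t * u i) with he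
  set Z : ℝ → ℝ := fun t => ∑ j, e j t with hZ
  haveI : Nonempty (Fin D) := ⟨⟨0, hD⟩⟩
  have hZpos : ∀ t, 0 < Z t := by
    intro t
    exact Finset.sum_pos (fun j _ => Real.exp_pos _) (Finset.univ_nonempty)
  set F : ℝ → ℝ := fun t => ∑ i, w i * (e i t / Z t) with hF
  set F' : ℝ → ℝ := fun t => ∑ i, w i * ((e i t / Z t) * (u i - ∑ j, (e j t / Z t) * u j)) with hF'
  have hderiv : ∀ t : ℝ, HasDerivAt F (F' t) t := by
    intro t
    have hei : ∀ i, HasDerivAt (fun t => e i t) (u i * e i t) t := by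
      intro i
      have h1 : HasDerivAt (fun t : ℝ => x₁ i + t * u i) (u i) t := by
        simpa using ((hasDerivAt_id t).mul_const (u i)).const_add (x₁ i)
      simpa [he, mul_comm] using h1.exp
    have hZd : HasDerivAt Z (∑ j, u j * e j t) t := by
      simpa [hZ] using HasDerivAt.fun_sum (fun j _ => hei j)
    have hq : ∀ i, HasDerivAt (fun t => w i * (e i t / Z t))
        (w i * ((u i * e i t * Z t - e i t * ∑ j, u j * e j t) / Z t ^ 2)) t := by
      intro i
      exact ((hei i).div hZd (hZpos t).ne').const_mul (w i)
    have := HasDerivAt.fun_sum (fun i (_ : i ∈ Finset.univ) => hq i)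
    refine this.congr_deriv (Eq.symm ?_)
    rw [hF']
    apply Finset.sum_congr rfl
    intro i _
    have hZne : Z t ≠ 0 := (hZpos t).ne'
    have hsd : ∑ j, (e j t / Z t) * u j = (∑ j, u j * e j t) / Z t := by
      rw [Finset.sum_div]
      exact Finset.sum_congr rfl fun j _ => by field_simp
    rw [hsd]
    field_simp
  have hbound : ∀ t : ℝ, |F' t| ≤ C := by
    intro t
    have hs0 : ∀ i, 0 ≤ e i t / Z t := fun i =>
      div_nonneg (Real.exp_pos _).le (hZpos t).le
    have hs1 : ∀ i, e i t / Z t ≤ 1 := by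
      intro i
      rw [div_le_one (hZpos t)]
      exact Finset.single_le_sum (f := fun j => e j t)
        (fun j _ => (Real.exp_pos _).le) (Finset.mem_univ i)
    have hsum : ∑ i, e i t / Z t = 1 := by
      rw [← Finset.sum_div]
      exact div_self (hZpos t).ne'
    simpa [hF', hC] using softmax_core (fun i => e i t / Z t) u w hs0 hs1 hsum
  have hmv : ‖F 1 - F 0‖ ≤ C * ‖(1 : ℝ) - 0‖ := by
    apply Convex.norm_image_sub_le_of_norm_hasDerivWithin_le
      (f' := F') (s := Set.univ)
      (fun t _ => (hderiv t).hasDerivWithinAt)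
      (fun t _ => by simpa using hbound t)
      convex_univ (Set.mem_univ _) (Set.mem_univ _)
  have he1 : ∀ i, e i 1 = Real.exp (x₂ i) := by
    intro i; rw [he]; simp [hu]
  have he0 : ∀ i, e i 0 = Real.exp (x₁ i) := by
    intro i; rw [he]; simp
  have hZ1 : Z 1 = ∑ j, Real.exp (x₂ j) := by
    simp only [hZ]; exact Finset.sum_congr rfl fun j _ => he1 j
  have hZ0 : Z 0 = ∑ j, Real.exp (x₁ j) := by
    simp only [hZ]; exact Finset.sum_congr rfl fun j _ => he0 j
  have hF1 : F 1 = ∑ i, w i * S x₂ i := by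
    simp only [hF]
    exact Finset.sum_congr rfl fun i _ => by rw [he1, hZ1, hS x₂ i]
  have hF0 : F 0 = ∑ i, w i * S x₁ i := by
    simp only [hF]
    exact Finset.sum_congr rfl fun i _ => by rw [he0, hZ0, hS x₁ i]
  have hdiff : F 1 - F 0 = ∑ i, w i ^ 2 := by
    rw [hF1, hF0, ← Finset.sum_sub_distrib]
    apply Finset.sum_congr rfl
    intro i _
    rw [hw]
    ring
  have hnormw : ‖S x₁ - S x₂‖ = Real.sqrt (∑ i, w i ^ 2) := by
    rw [EuclideanSpace.norm_eq]
    congr 1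
    apply Finset.sum_congr rfl
    intro i _
    rw [show (S x₁ - S x₂) i = S x₁ i - S x₂ i from rfl, Real.norm_eq_abs, sq_abs, hw]
    ring
  have hnormu : ‖x₁ - x₂‖ = Real.sqrt (∑ i, u i ^ 2) := by
    rw [EuclideanSpace.norm_eq]
    congr 1
    apply Finset.sum_congr rfl
    intro i _
    rw [show (x₁ - x₂) i = x₁ i - x₂ i from rfl, Real.norm_eq_abs, sq_abs, hu]
    ring
  set N := Real.sqrt (∑ i, w i ^ 2) with hN
  set M := Real.sqrt (∑ i, u i ^ 2) with hM
  have hsq : N ^ 2 = ∑ i, w i ^ 2 := Real.sq_sqrt (Finset.sum_nonneg fun i _ => sq_nonneg _)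
  have hkey : N ^ 2 ≤ M * N := by
    rw [hsq]
    calc ∑ i, w i ^ 2 = F 1 - F 0 := hdiff.symm
      _ ≤ ‖F 1 - F 0‖ := le_abs_self _
      _ ≤ C * ‖(1 : ℝ) - 0‖ := hmv
      _ = M * N := by rw [hC]; simp
  rw [hnormw, hnormu]
  have hNnn : (0:ℝ) ≤ N := Real.sqrt_nonneg _
  rcases eq_or_lt_of_le hNnn with h0 | h0
  · rw [← h0]; exact Real.sqrt_nonneg _
  · have h : N * N ≤ M * N := by nlinarith
    exact le_of_mul_le_mul_right h h0
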